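/- Fix a power budget P_max > 0, unit-norm beamformers w̃_1,…,w̃_K, and SINR targets γ_1,…,γ_K ≥ 0. Then there exists a nonnegative p ∈ ℝ^K with Σ_k p_k ≤ P_max and γ^dl_k(W̃,p) ≥ γ_k for all k if and only if there exists a nonnegative q ∈ ℝ^K with Σ_k q_k ≤ P_max and γ^ul_k(W̃,q) ≥ γ_k for all k. (The uplink and downlink have the same achievable SINR region for a fixed set of normalized beamformers.) -/

import Mathlib

open scoped BigOperators

/-- `a^H b` : Hermitian inner product of two complex vectors. -/
noncomputable def ip {N : ℕ} (a b : Fin N → ℂ) : ℂ :=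
  ∑ i, (starRingEnd ℂ) (a i) * b i

/-- Downlink SINR of user `k` for normalized beamformers `W` and power vector `p`. -/
noncomputable def sinrDL {N K : ℕ} (h : Fin K → Fin N → ℂ) (σ2 : ℝ)
    (W : Fin K → Fin N → ℂ) (p : Fin K → ℝ) (k : Fin K) : ℝ :=
  p k * ‖ip (h k) (W k)‖ ^ 2 /
    ((∑ j ∈ Finset.univ.erase k, p j * ‖ip (h k) (W j)‖ ^ 2) + σ2)

/-- Virtual uplink SINR of user `k` for normalized beamformers `W` and power vector `q`. -/
noncomputable def sinrUL {N K : ℕ} (h : Fin K → Fin N → ℂ) (σ2 : ℝ)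
    (W : Fin K → Fin N → ℂ) (q : Fin K → ℝ) (k : Fin K) : ℝ :=
  q k * ‖ip (h k) (W k)‖ ^ 2 /
    ((∑ j ∈ Finset.univ.erase k, q j * ‖ip (h j) (W k)‖ ^ 2) + σ2)

section AuxDuality
open Finset

/-- Z-matrix with a positive vector mapped to a positive vector is inverse-positive
in the following sense. -/
lemma nonneg_of_Z {K : ℕ} (B : Matrix (Fin K) (Fin K) ℝ)
    (hoff : ∀ k j, j ≠ k → B k j ≤ 0)
    (p' : Fin K → ℝ) (hp' : ∀ k, 0 < p' k)
    (hBp' : ∀ k, 0 < B.mulVec p' k)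
    (x : Fin K → ℝ) (hx : ∀ k, 0 ≤ B.mulVec x k) : ∀ k, 0 ≤ x k := by
  by_contra hcon
  push_neg at hcon
  obtain ⟨kb, hkb⟩ := hcon
  obtain ⟨k0, -, hk0⟩ := Finset.exists_max_image Finset.univ (fun k => -x k / p' k)
    ⟨kb, Finset.mem_univ kb⟩
  set t := -x k0 / p' k0 with ht
  have htpos : 0 < t := by
    have h1 : 0 < -x kb / p' kb := div_pos (by linarith) (hp' kb)
    exact lt_of_lt_of_le h1 (hk0 kb (Finset.mem_univ kb))
  set y : Fin K → ℝ := fun k => x k + t * p' k with hy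
  have hynn : ∀ k, 0 ≤ y k := by
    intro k
    have h1 : -x k / p' k ≤ t := hk0 k (Finset.mem_univ k)
    have h2 : -x k ≤ t * p' k := by
      rw [div_le_iff₀ (hp' k)] at h1; linarith
    simp only [hy]; linarith
  have hyk0 : y k0 = 0 := by
    have := (hp' k0).ne'
    simp only [hy, ht]
    field_simp
    ring
  have hpos : 0 < B.mulVec y k0 := by
    have : B.mulVec y k0 = B.mulVec x k0 + t * B.mulVec p' k0 := by
      simp only [Matrix.mulVec, dotProduct, hy]
      rw [Finset.mul_sum, ← Finset.sum_add_distrib]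
      apply Finset.sum_congr rfl
      intro j _
      ring
    rw [this]
    have := hx k0
    have := hBp' k0
    nlinarith
  have hnonpos : B.mulVec y k0 ≤ 0 := by
    simp only [Matrix.mulVec, dotProduct]
    apply Finset.sum_nonpos
    intro j _
    by_cases hj : j = k0
    · subst hj; rw [hyk0]; simp
    · exact mul_nonpos_of_nonpos_of_nonneg (hoff k0 j hj) (hynn j)
  linarith

lemma key {K : ℕ} (G : Fin K → Fin K → ℝ) (hG : ∀ k j, 0 ≤ G k j)
    (σ2 : ℝ) (hσ : 0 < σ2) (γ : Fin K → ℝ) (hγ : ∀ k, 0 ≤ γ k)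
    (Pmax : ℝ) (p : Fin K → ℝ) (hp : ∀ k, 0 ≤ p k) (hsum : ∑ k, p k ≤ Pmax)
    (hcon : ∀ k, γ k * ((∑ j ∈ Finset.univ.erase k, p j * G k j) + σ2) ≤ p k * G k k) :
    ∃ q : Fin K → ℝ, (∀ k, 0 ≤ q k) ∧ (∑ k, q k) ≤ Pmax ∧
      ∀ k, γ k * ((∑ j ∈ Finset.univ.erase k, q j * G j k) + σ2) ≤ q k * G k k := by
  classical
  set S : Finset (Fin K) := Finset.univ.filter (fun k => 0 < γ k) with hS
  have hmemS : ∀ k, k ∈ S ↔ 0 < γ k := by intro k; simp [hS]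
  have hnotS : ∀ k, k ∉ S → γ k = 0 := by
    intro k hk
    rw [hmemS, not_lt] at hk
    linarith [hγ k]
  have hInn : ∀ k, 0 ≤ ∑ j ∈ Finset.univ.erase k, p j * G k j :=
    fun k => Finset.sum_nonneg (fun j _ => mul_nonneg (hp j) (hG k j))
  have hpk : ∀ k ∈ S, 0 < p k ∧ 0 < G k k := by
    intro k hk
    have hγk := (hmemS k).1 hk
    have h1 : 0 < p k * G k k := by
      refine lt_of_lt_of_le ?_ (hcon k)
      have := hInn k
      nlinarith
    rcases mul_pos_iff.1 h1 with ⟨h2, h3⟩ | ⟨h2, _⟩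
    · exact ⟨h2, h3⟩
    · exact absurd h2 (not_lt.2 (hp k))
  set d : Fin K → ℝ := fun k => if k ∈ S then G k k / γ k else 1 with hd
  set F : Fin K → Fin K → ℝ := fun k j => if k ∈ S ∧ j ∈ S then G k j else 0 with hF
  set B : Matrix (Fin K) (Fin K) ℝ := fun k j => if j = k then d k else -F k j with hB
  have hFnn : ∀ k j, 0 ≤ F k j := by
    intro k j
    simp only [hF]
    split
    · exact hG k j
    · exact le_refl 0
  have hoff : ∀ k j, j ≠ k → B k j ≤ 0 := by
    intro k j hjk
    simp only [hB, if_neg hjk]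
    exact neg_nonpos.2 (hFnn k j)
  -- mulVec formula
  have hmul : ∀ (v : Fin K → ℝ) (k : Fin K),
      B.mulVec v k = d k * v k - ∑ j ∈ Finset.univ.erase k, F k j * v j := by
    intro v k
    have h0 : B.mulVec v k = ∑ j, B k j * v j := rfl
    rw [h0, ← Finset.add_sum_erase _ _ (Finset.mem_univ k)]
    have h1 : B k k * v k = d k * v k := by simp [hB]
    have h2 : ∑ j ∈ Finset.univ.erase k, B k j * v j
        = -∑ j ∈ Finset.univ.erase k, F k j * v j := by
      rw [← Finset.sum_neg_distrib]
      apply Finset.sum_congr rfl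
      intro j hj
      have hjk : j ≠ k := Finset.ne_of_mem_erase hj
      simp only [hB, if_neg hjk]
      ring
    rw [h1, h2]
    ring
  -- key estimate
  have hest : ∀ (v : Fin K → ℝ), (∀ k ∈ S, v k = p k) → (∀ k, 0 ≤ v k) →
      ∀ k ∈ S, σ2 ≤ B.mulVec v k := by
    intro v hvS hvnn k hk
    have hγk := (hmemS k).1 hk
    rw [hmul]
    have hdk : d k = G k k / γ k := by simp [hd, hk]
    have h1 : (∑ j ∈ Finset.univ.erase k, p j * G k j) + σ2 ≤ d k * v k := by
      rw [hdk, hvS k hk, div_mul_eq_mul_div, le_div_iff₀ hγk]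
      calc ((∑ j ∈ Finset.univ.erase k, p j * G k j) + σ2) * γ k
          = γ k * ((∑ j ∈ Finset.univ.erase k, p j * G k j) + σ2) := by ring
        _ ≤ p k * G k k := hcon k
        _ = G k k * p k := by ring
    have h2 : ∑ j ∈ Finset.univ.erase k, F k j * v j
        ≤ ∑ j ∈ Finset.univ.erase k, p j * G k j := by
      apply Finset.sum_le_sum
      intro j hj
      by_cases hjS : j ∈ S
      · have hFkj : F k j = G k j := by simp [hF, hk, hjS]
        rw [hFkj, hvS j hjS, mul_comm]
      · have hFkj : F k j = 0 := by simp [hF, hjS]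
        rw [hFkj, zero_mul]
        exact mul_nonneg (hp j) (hG k j)
    linarith
  -- positive test vector
  set p' : Fin K → ℝ := fun k => if k ∈ S then p k else 1 with hp'def
  have hp'pos : ∀ k, 0 < p' k := by
    intro k
    simp only [hp'def]
    split
    · exact (hpk k (by assumption)).1
    · exact one_pos
  have hBp' : ∀ k, 0 < B.mulVec p' k := by
    intro k
    by_cases hk : k ∈ S
    · have := hest p' (fun k hk => by simp [hp'def, hk]) (fun k => (hp'pos k).le) k hk
      linarith
    · rw [hmul]
      have hdk : d k = 1 := by simp [hd, hk]
      have hpk' : p' k = 1 := by simp [hp'def, hk]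
      have hFz : ∀ j ∈ Finset.univ.erase k, F k j * p' j = 0 := by
        intro j _
        simp [hF, hk]
      rw [Finset.sum_congr rfl hFz, hdk, hpk']
      simp
  -- invertibility
  have hdet : B.det ≠ 0 := by
    intro hzero
    obtain ⟨v, hv0, hv⟩ := (Matrix.exists_mulVec_eq_zero_iff).2 hzero
    apply hv0
    funext k
    have h1 : ∀ k, 0 ≤ v k := by
      apply nonneg_of_Z B hoff p' hp'pos hBp'
      intro k
      rw [hv]
      simp
    have h2 : ∀ k, 0 ≤ (-v) k := by
      apply nonneg_of_Z B hoff p' hp'pos hBp' (-v)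
      intro k
      rw [Matrix.mulVec_neg, hv]
      simp
    have ha := h1 k
    have hb := h2 k
    simp only [Pi.neg_apply] at hb
    simp only [Pi.zero_apply]
    linarith
  have hunit : IsUnit B.det := isUnit_iff_ne_zero.2 hdet
  have hBB : B * B⁻¹ = 1 := Matrix.mul_nonsing_inv B hunit
  have hBBi : B⁻¹ * B = 1 := Matrix.nonsing_inv_mul B hunit
  -- structural facts about rows/columns of B outside S
  have hBkrow : ∀ k, k ∉ S → ∀ i, B k i = if i = k then 1 else 0 := by
    intro k hk i
    by_cases hik : i = k
    · simp [hB, hik, hd, hk]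
    · simp [hB, hik, hF, hk]
  have hBkcol : ∀ k, k ∉ S → ∀ i, B i k = if k = i then 1 else 0 := by
    intro k hk i
    by_cases hik : k = i
    · subst hik
      simp [hB, hd, hk]
    · simp [hB, hik, hF, hk]
  have hrow : ∀ k, k ∉ S → ∀ j, B⁻¹ k j = if k = j then 1 else 0 := by
    intro k hk j
    have h1 : (B * B⁻¹) k j = (1 : Matrix (Fin K) (Fin K) ℝ) k j := by rw [hBB]
    rw [Matrix.mul_apply, Matrix.one_apply] at h1
    rw [← h1, Finset.sum_eq_single k]
    · simp [hBkrow k hk k]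
    · intro i _ hik
      rw [hBkrow k hk i, if_neg hik, zero_mul]
    · intro habs
      exact absurd (Finset.mem_univ k) habs
  have hcol : ∀ k, k ∉ S → ∀ j, B⁻¹ j k = if j = k then 1 else 0 := by
    intro k hk j
    have h1 : (B⁻¹ * B) j k = (1 : Matrix (Fin K) (Fin K) ℝ) j k := by rw [hBBi]
    rw [Matrix.mul_apply, Matrix.one_apply] at h1
    rw [← h1, Finset.sum_eq_single k]
    · simp [hBkcol k hk k]
    · intro i _ hik
      rw [hBkcol k hk i, if_neg (fun h => hik h.symm), mul_zero]
    · intro habs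
      exact absurd (Finset.mem_univ k) habs
  -- nonnegativity of the inverse
  have hBinv_nn : ∀ k j, 0 ≤ B⁻¹ k j := by
    intro k j
    refine nonneg_of_Z B hoff p' hp'pos hBp' (fun i => B⁻¹ i j) ?_ k
    intro i
    have h1 : B.mulVec (fun l => B⁻¹ l j) i = (B * B⁻¹) i j := by
      rw [Matrix.mul_apply]
      rfl
    rw [h1, hBB, Matrix.one_apply]
    split
    · exact zero_le_one
    · exact le_refl 0
  -- vectors
  set c : Fin K → ℝ := fun k => if k ∈ S then σ2 else 0 with hc
  have hcnn : ∀ k, 0 ≤ c k := by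
    intro k
    simp only [hc]
    split
    · exact hσ.le
    · exact le_refl 0
  set pt : Fin K → ℝ := fun k => if k ∈ S then p k else 0 with hpt
  have hptnn : ∀ k, 0 ≤ pt k := by
    intro k
    simp only [hpt]
    split
    · exact hp k
    · exact le_refl 0
  have hBpt : ∀ k, c k ≤ B.mulVec pt k := by
    intro k
    by_cases hk : k ∈ S
    · have := hest pt (fun k hk => by simp [hpt, hk]) hptnn k hk
      simp only [hc, if_pos hk]
      linarith
    · rw [hmul]
      have hdk : d k = 1 := by simp [hd, hk]
      have hptk : pt k = 0 := by simp [hpt, hk]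
      have hFz : ∀ j ∈ Finset.univ.erase k, F k j * pt j = 0 := by
        intro j _
        simp [hF, hk]
      rw [Finset.sum_congr rfl hFz, hdk, hptk]
      simp [hc, hk]
  -- the minimal downlink power vector
  have hxle : ∀ k, (B⁻¹).mulVec c k ≤ pt k := by
    intro k
    have hrep : pt = (B⁻¹).mulVec (B.mulVec pt) := by
      rw [Matrix.mulVec_mulVec, hBBi, Matrix.one_mulVec]
    have hdiff : pt k - (B⁻¹).mulVec c k
        = ∑ j, B⁻¹ k j * (B.mulVec pt j - c j) := by
      conv_lhs => rw [hrep]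
      simp only [Matrix.mulVec, dotProduct, mul_sub]
      rw [Finset.sum_sub_distrib]
    have h2 : 0 ≤ ∑ j, B⁻¹ k j * (B.mulVec pt j - c j) :=
      Finset.sum_nonneg fun j _ =>
        mul_nonneg (hBinv_nn k j) (sub_nonneg.2 (hBpt j))
    linarith [hdiff ▸ h2]
  -- the uplink power vector
  set q : Fin K → ℝ := fun k => ∑ j, B⁻¹ j k * c j with hq
  have hqnn : ∀ k, 0 ≤ q k := by
    intro k
    exact Finset.sum_nonneg fun j _ => mul_nonneg (hBinv_nn j k) (hcnn j)
  have hqzero : ∀ k, k ∉ S → q k = 0 := by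
    intro k hk
    simp only [hq]
    rw [Finset.sum_eq_single k]
    · rw [hcol k hk k, if_pos rfl, one_mul]
      simp [hc, hk]
    · intro j _ hjk
      rw [hcol k hk j, if_neg hjk, zero_mul]
    · intro habs
      exact absurd (Finset.mem_univ k) habs
  have hqeq : ∀ k, (∑ j, B j k * q j) = c k := by
    intro k
    calc ∑ j, B j k * q j = ∑ j, ∑ i, B j k * (B⁻¹ i j * c i) := by
          apply Finset.sum_congr rfl
          intro j _
          simp only [hq]
          rw [Finset.mul_sum]
      _ = ∑ i, ∑ j, B j k * (B⁻¹ i j * c i) := Finset.sum_comm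
      _ = ∑ i, (∑ j, B⁻¹ i j * B j k) * c i := by
          apply Finset.sum_congr rfl
          intro i _
          rw [Finset.sum_mul]
          apply Finset.sum_congr rfl
          intro j _
          ring
      _ = ∑ i, (1 : Matrix (Fin K) (Fin K) ℝ) i k * c i := by
          apply Finset.sum_congr rfl
          intro i _
          rw [← Matrix.mul_apply, hBBi]
      _ = c k := by
          rw [Finset.sum_eq_single k]
          · rw [Matrix.one_apply_eq, one_mul]
          · intro i _ hik
            rw [Matrix.one_apply_ne hik, zero_mul]
          · intro habs
            exact absurd (Finset.mem_univ k) habs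
  -- sum bound
  have hsq : ∑ k, q k ≤ Pmax := by
    have e1 : ∑ k, q k = ∑ j, c j * (∑ k, B⁻¹ j k) := by
      simp only [hq]
      rw [Finset.sum_comm]
      apply Finset.sum_congr rfl
      intro j _
      rw [Finset.mul_sum]
      apply Finset.sum_congr rfl
      intro k _
      ring
    have e2 : ∑ k, (B⁻¹).mulVec c k = ∑ j, c j * (∑ k, B⁻¹ k j) := by
      simp only [Matrix.mulVec, dotProduct]
      rw [Finset.sum_comm]
      apply Finset.sum_congr rfl
      intro j _
      rw [Finset.mul_sum]
      apply Finset.sum_congr rfl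
      intro k _
      ring
    have e3 : ∑ j, c j * (∑ k, B⁻¹ j k) = σ2 * ∑ j ∈ S, ∑ k ∈ S, B⁻¹ j k := by
      rw [Finset.mul_sum]
      rw [← Finset.sum_subset (Finset.subset_univ S)
        (fun j _ hj => by simp [hc, hj])]
      apply Finset.sum_congr rfl
      intro j hj
      rw [← Finset.sum_subset (Finset.subset_univ S)
        (fun k _ hk => by
          rw [hcol k hk j, if_neg (by rintro rfl; exact hk hj)])]
      simp only [hc, if_pos hj]
    have e4 : ∑ j, c j * (∑ k, B⁻¹ k j) = σ2 * ∑ j ∈ S, ∑ k ∈ S, B⁻¹ k j := by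
      rw [Finset.mul_sum]
      rw [← Finset.sum_subset (Finset.subset_univ S)
        (fun j _ hj => by simp [hc, hj])]
      apply Finset.sum_congr rfl
      intro j hj
      rw [← Finset.sum_subset (Finset.subset_univ S)
        (fun k _ hk => by
          rw [hrow k hk j, if_neg (by rintro rfl; exact hk hj)])]
      simp only [hc, if_pos hj]
    have e5 : (∑ j ∈ S, ∑ k ∈ S, B⁻¹ j k) = ∑ j ∈ S, ∑ k ∈ S, B⁻¹ k j :=
      Finset.sum_comm
    have hptsum : ∑ k, pt k ≤ ∑ k, p k := by
      apply Finset.sum_le_sum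
      intro k _
      simp only [hpt]
      split
      · exact le_refl _
      · exact hp k
    have hxsum : ∑ k, (B⁻¹).mulVec c k ≤ ∑ k, pt k :=
      Finset.sum_le_sum fun k _ => hxle k
    have : ∑ k, q k = ∑ k, (B⁻¹).mulVec c k := by
      rw [e1, e2, e3, e4, e5]
    linarith
  -- final constraints
  refine ⟨q, hqnn, hsq, ?_⟩
  intro k
  by_cases hk : k ∈ S
  · have hγk := (hmemS k).1 hk
    have h1 := hqeq k
    have hsplit : ∑ j, B j k * q j
        = d k * q k - ∑ j ∈ Finset.univ.erase k, F j k * q j := by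
      rw [← Finset.add_sum_erase _ _ (Finset.mem_univ k)]
      have ha : B k k * q k = d k * q k := by simp [hB]
      have hb : ∑ j ∈ Finset.univ.erase k, B j k * q j
          = -∑ j ∈ Finset.univ.erase k, F j k * q j := by
        rw [← Finset.sum_neg_distrib]
        apply Finset.sum_congr rfl
        intro j hj
        have hjk : j ≠ k := Finset.ne_of_mem_erase hj
        simp only [hB, if_neg (fun h : k = j => hjk h.symm)]
        ring
      rw [ha, hb]
      ring
    rw [hsplit] at h1
    have hck : c k = σ2 := by simp [hc, hk]
    rw [hck] at h1
    have hterm : ∑ j ∈ Finset.univ.erase k, q j * G j k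
        = ∑ j ∈ Finset.univ.erase k, F j k * q j := by
      apply Finset.sum_congr rfl
      intro j _
      by_cases hjS : j ∈ S
      · have : F j k = G j k := by simp [hF, hjS, hk]
        rw [this, mul_comm]
      · rw [hqzero j hjS]
        simp [hF, hjS]
    rw [hterm]
    have hdk : d k = G k k / γ k := by simp [hd, hk]
    rw [hdk] at h1
    have h2 : (∑ j ∈ Finset.univ.erase k, F j k * q j) + σ2 = G k k / γ k * q k := by
      linarith
    rw [h2]
    rw [mul_comm (γ k) _, div_mul_eq_mul_div, div_mul_eq_mul_div,
      mul_div_assoc, div_self hγk.ne', mul_one]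
    rw [mul_comm]
  · rw [hnotS k hk, zero_mul]
    exact mul_nonneg (hqnn k) (hG k k)

end AuxDuality

/-- Uplink and downlink achievable SINR regions coincide for fixed normalized beamformers. -/
theorem uplink_downlink_same_sinr_region
    {N K : ℕ} (hN : 0 < N)
    (h : Fin K → Fin N → ℂ) (σ2 : ℝ) (hσ : 0 < σ2)
    (Pmax : ℝ) (hP : 0 < Pmax)
    (W : Fin K → Fin N → ℂ) (hW : ∀ k, ∑ i, ‖W k i‖ ^ 2 = 1)
    (γ : Fin K → ℝ) (hγ : ∀ k, 0 ≤ γ k) :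
    (∃ p : Fin K → ℝ, (∀ k, 0 ≤ p k) ∧ (∑ k, p k) ≤ Pmax ∧
        ∀ k, γ k ≤ sinrDL h σ2 W p k) ↔
    (∃ q : Fin K → ℝ, (∀ k, 0 ≤ q k) ∧ (∑ k, q k) ≤ Pmax ∧
        ∀ k, γ k ≤ sinrUL h σ2 W q k) := by
  constructor
  · rintro ⟨p, hp0, hpsum, hpcon⟩
    obtain ⟨q, hq0, hqsum, hqcon⟩ :=
      key (fun k j => ‖ip (h k) (W j)‖ ^ 2) (fun k j => by positivity)
        σ2 hσ γ hγ Pmax p hp0 hpsum (by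
          intro k
          have hden : 0 < (∑ j ∈ Finset.univ.erase k, p j * ‖ip (h k) (W j)‖ ^ 2) + σ2 := by
            have : 0 ≤ ∑ j ∈ Finset.univ.erase k, p j * ‖ip (h k) (W j)‖ ^ 2 :=
              Finset.sum_nonneg fun j _ => mul_nonneg (hp0 j) (by positivity)
            linarith
          have hk := hpcon k
          simp only [sinrDL] at hk
          rw [le_div_iff₀ hden] at hk
          exact hk)
    refine ⟨q, hq0, hqsum, ?_⟩
    intro k
    have hden : 0 < (∑ j ∈ Finset.univ.erase k, q j * ‖ip (h j) (W k)‖ ^ 2) + σ2 := by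
      have : 0 ≤ ∑ j ∈ Finset.univ.erase k, q j * ‖ip (h j) (W k)‖ ^ 2 :=
        Finset.sum_nonneg fun j _ => mul_nonneg (hq0 j) (by positivity)
      linarith
    simp only [sinrUL]
    rw [le_div_iff₀ hden]
    exact hqcon k
  · rintro ⟨q, hq0, hqsum, hqcon⟩
    obtain ⟨p, hp0, hpsum, hpcon⟩ :=
      key (fun k j => ‖ip (h j) (W k)‖ ^ 2) (fun k j => by positivity)
        σ2 hσ γ hγ Pmax q hq0 hqsum (by
          intro k
          have hden : 0 < (∑ j ∈ Finset.univ.erase k, q j * ‖ip (h j) (W k)‖ ^ 2) + σ2 := by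
            have : 0 ≤ ∑ j ∈ Finset.univ.erase k, q j * ‖ip (h j) (W k)‖ ^ 2 :=
              Finset.sum_nonneg fun j _ => mul_nonneg (hq0 j) (by positivity)
            linarith
          have hk := hqcon k
          simp only [sinrUL] at hk
          rw [le_div_iff₀ hden] at hk
          exact hk)
    refine ⟨p, hp0, hpsum, ?_⟩
    intro k
    have hden : 0 < (∑ j ∈ Finset.univ.erase k, p j * ‖ip (h k) (W j)‖ ^ 2) + σ2 := by
      have : 0 ≤ ∑ j ∈ Finset.univ.erase k, p j * ‖ip (h k) (W j)‖ ^ 2 :=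
        Finset.sum_nonneg fun j _ => mul_nonneg (hp0 j) (by positivity)
      linarith
    simp only [sinrDL]
    rw [le_div_iff₀ hden]
    exact hpcon k
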